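/- Let X be a normed space that admits a linear map F onto a subspace V of ℂⁿ (with sup norm) satisfying ‖x‖/α ≤ ‖F(x)‖ ≤ α‖x‖ for some α ≥ 1. Then for all R > r > 0, the ball B_X(0,R) satisfies η_X(B_X(0,R), r) ≤ (4√2·α²·R/r + 2)^{2n}. -/

import Mathlib

open Metric

set_option maxHeartbeats 1000000 in
/-- If a complex normed space `X` admits a linear map `F` into `ℂⁿ` (with the sup norm) that
is `α`-bi-Lipschitz onto its image, then the ball `B_X(0,R)` can be covered by at most
`(4√2·α²·R/r + 2)^(2n)` balls of radius `r`, for all `R > r > 0`. -/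
theorem coveringNumber_ball_of_embedding {X : Type*}
    [NormedAddCommGroup X] [NormedSpace ℂ X] (n : ℕ)
    (F : X →ₗ[ℂ] (Fin n → ℂ)) (α : ℝ) (hα : 1 ≤ α)
    (hbl : ∀ x : X, ‖x‖ / α ≤ ‖F x‖ ∧ ‖F x‖ ≤ α * ‖x‖)
    (R r : ℝ) (hr : 0 < r) (hrR : r < R) :
    ∃ s : Finset X, (s.card : ℝ) ≤ (4 * Real.sqrt 2 * α ^ 2 * R / r + 2) ^ (2 * n) ∧
      Metric.ball (0 : X) R ⊆ ⋃ x ∈ s, Metric.ball x r := by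
  classical
  have hα0 : (0:ℝ) < α := lt_of_lt_of_le one_pos hα
  set r' : ℝ := r / (2 * α) with hr'def
  have hr'0 : 0 < r' := by positivity
  set δ : ℝ := 6 * r' / 5 with hδdef
  have hδ0 : 0 < δ := by positivity
  set R' : ℝ := α * R with hR'def
  have hR'0 : 0 < R' := mul_pos hα0 (hr.trans hrR)
  set M : ℤ := ⌊R' / δ⌋ + 1 with hMdef
  have hM0 : 0 ≤ M := by
    have : (0:ℤ) ≤ ⌊R' / δ⌋ := Int.floor_nonneg.mpr (by positivity)
    omega
  -- the grid
  set G : Finset ℤ := Finset.Icc (-M) M with hGdef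
  set grid : Finset (Fin n → ℤ × ℤ) := Fintype.piFinset (fun _ => G ×ˢ G) with hgriddef
  set c : (Fin n → ℤ × ℤ) → (Fin n → ℂ) :=
    fun g i => (δ : ℂ) * ((g i).1 + (g i).2 * Complex.I) with hcdef
  set pick : (Fin n → ℤ × ℤ) → X := fun g =>
    if h : ∃ x : X, x ∈ Metric.ball (0:X) R ∧ ‖F x - c g‖ < r' then h.choose else 0
    with hpickdef
  refine ⟨grid.image pick, ?_, ?_⟩
  · -- cardinality bound
    have hGcard : G.card = (2 * M + 1).toNat := by
      rw [hGdef, Int.card_Icc]; congr 1; ring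
    have hcard : grid.card = (2 * M + 1).toNat ^ (2 * n) := by
      rw [hgriddef, Fintype.card_piFinset]
      simp only [Finset.card_product, hGcard, Finset.prod_const, Finset.card_univ,
        Fintype.card_fin]
      ring
    have hsqrt2 : (1.4:ℝ) ≤ Real.sqrt 2 := by
      nlinarith [Real.sq_sqrt (by norm_num : (0:ℝ) ≤ 2), Real.sqrt_nonneg 2]
    have hMbound : ((2 * M + 1 : ℤ) : ℝ) ≤ 4 * Real.sqrt 2 * α ^ 2 * R / r + 2 := by
      have h1 : (M : ℝ) ≤ R' / δ + 1 := by
        rw [hMdef]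
        push_cast
        have := Int.floor_le (R' / δ)
        linarith
      have ht : (2:ℝ) ≤ 2 * α ^ 2 * R / r := by
        rw [le_div_iff₀ hr]
        nlinarith
      have h2 : R' / δ = (5/6) * (α * R / r') := by
        rw [hδdef]; field_simp; ring
      have h3 : α * R / r' = 2 * α ^ 2 * R / r := by
        rw [hr'def]; field_simp
      push_cast
      rw [h2, h3] at h1
      set t : ℝ := 2 * α ^ 2 * R / r with htdef
      have : 4 * Real.sqrt 2 * α ^ 2 * R / r = 2 * Real.sqrt 2 * t := by
        rw [htdef]; ring
      rw [this]
      nlinarith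
    have hNR : (((2 * M + 1).toNat : ℕ) : ℝ) = ((2 * M + 1 : ℤ) : ℝ) := by
      rw [← Int.cast_natCast, Int.toNat_of_nonneg (by omega)]
    calc ((grid.image pick).card : ℝ) ≤ (grid.card : ℝ) := by
          exact_mod_cast Finset.card_image_le
      _ = (((2 * M + 1).toNat : ℕ) : ℝ) ^ (2 * n) := by rw [hcard]; push_cast; ring
      _ ≤ (4 * Real.sqrt 2 * α ^ 2 * R / r + 2) ^ (2 * n) := by
          rw [hNR]
          exact pow_le_pow_left₀ (by positivity) hMbound _
  · -- covering
    intro x hx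
    rw [mem_ball_zero_iff] at hx
    set g : Fin n → ℤ × ℤ := fun i =>
      (round ((F x i).re / δ), round ((F x i).im / δ)) with hgdef
    have hcoord : ∀ i, ‖F x i‖ < R' := fun i => by
      calc ‖F x i‖ = ‖F x i‖ := rfl
        _ ≤ ‖F x‖ := norm_le_pi_norm _ i
        _ ≤ α * ‖x‖ := (hbl x).2
        _ < α * R := by exact mul_lt_mul_of_pos_left hx hα0
    have hround : ∀ a : ℝ, |a| < R' → |round (a / δ)| ≤ M := by
      intro a ha
      have h1 : |(round (a / δ) : ℝ)| ≤ |a / δ| + 1/2 := by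
        have := abs_sub_round (a / δ)
        calc |(round (a / δ) : ℝ)| ≤ |(round (a/δ) : ℝ) - a/δ| + |a/δ| := by
              have := abs_sub_abs_le_abs_sub ((round (a/δ) : ℝ)) (a/δ)
              have h := abs_sub_comm ((round (a/δ) : ℝ)) (a/δ)
              nlinarith [abs_nonneg (a/δ), abs_nonneg ((round (a/δ) : ℝ) - a/δ)]
          _ ≤ 1/2 + |a/δ| := by rw [abs_sub_comm]; linarith
          _ = |a/δ| + 1/2 := by ring
      have h2 : |a / δ| < R' / δ := by
        rw [abs_div, abs_of_pos hδ0]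
        gcongr
      have h3 : R' / δ < ⌊R' / δ⌋ + 1 := Int.lt_floor_add_one _
      have : |(round (a / δ) : ℝ)| < (M : ℝ) + 1/2 := by
        rw [hMdef]; push_cast; linarith
      have h5 : ((|round (a / δ)| : ℤ) : ℝ) < (M : ℝ) + 1 := by
        rw [Int.cast_abs]; linarith
      exact Int.lt_add_one_iff.mp (by exact_mod_cast h5)
    have hgmem : g ∈ grid := by
      rw [hgriddef, Fintype.mem_piFinset]
      intro i
      rw [Finset.mem_product]
      constructor <;> rw [hGdef, Finset.mem_Icc, ← abs_le] <;>
        apply hround <;>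
        [exact lt_of_le_of_lt (Complex.abs_re_le_norm _) (hcoord i);
         exact lt_of_le_of_lt (Complex.abs_im_le_norm _) (hcoord i)]
    have hclose : ‖F x - c g‖ < r' := by
      rw [pi_norm_lt_iff hr'0]
      intro i
      have hzre : |(F x i - c g i).re| ≤ δ / 2 := by
        have : (c g i).re = δ * round ((F x i).re / δ) := by
          rw [hcdef]; simp [Complex.add_re, Complex.mul_re, hgdef]
        rw [Complex.sub_re, this]
        have h := abs_sub_round ((F x i).re / δ)
        have : (F x i).re - δ * round ((F x i).re / δ)
            = δ * ((F x i).re / δ - round ((F x i).re / δ)) := by field_simp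
        rw [this, abs_mul, abs_of_pos hδ0]
        nlinarith
      have hzim : |(F x i - c g i).im| ≤ δ / 2 := by
        have : (c g i).im = δ * round ((F x i).im / δ) := by
          rw [hcdef]; simp [Complex.add_im, Complex.mul_im, hgdef]
        rw [Complex.sub_im, this]
        have h := abs_sub_round ((F x i).im / δ)
        have : (F x i).im - δ * round ((F x i).im / δ)
            = δ * ((F x i).im / δ - round ((F x i).im / δ)) := by field_simp
        rw [this, abs_mul, abs_of_pos hδ0]
        nlinarith
      have hs15 : Real.sqrt 2 ≤ 1.5 := by
        nlinarith [Real.sq_sqrt (by norm_num : (0:ℝ) ≤ 2), Real.sqrt_nonneg 2]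
      calc ‖F x i - c g i‖ = ‖F x i - c g i‖ := rfl
        _ ≤ Real.sqrt 2 * max |(F x i - c g i).re| |(F x i - c g i).im| :=
            Complex.norm_le_sqrt_two_mul_max _
        _ ≤ Real.sqrt 2 * (δ / 2) := by
            apply mul_le_mul_of_nonneg_left _ (Real.sqrt_nonneg 2)
            exact max_le hzre hzim
        _ < r' := by rw [hδdef]; nlinarith
    have hex : ∃ y : X, y ∈ Metric.ball (0:X) R ∧ ‖F y - c g‖ < r' :=
      ⟨x, mem_ball_zero_iff.mpr hx, hclose⟩
    have hpick : pick g ∈ Metric.ball (0:X) R ∧ ‖F (pick g) - c g‖ < r' := by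
      rw [hpickdef]
      simp only [dif_pos hex]
      exact hex.choose_spec
    rw [Set.mem_iUnion₂]
    refine ⟨pick g, Finset.mem_image_of_mem _ hgmem, ?_⟩
    rw [mem_ball]
    have h1 : ‖x - pick g‖ / α ≤ ‖F (x - pick g)‖ := (hbl _).1
    have h2 : ‖F (x - pick g)‖ ≤ ‖F x - c g‖ + ‖F (pick g) - c g‖ := by
      rw [map_sub]
      calc ‖F x - F (pick g)‖ = ‖(F x - c g) - (F (pick g) - c g)‖ := by ring_nf
        _ ≤ ‖F x - c g‖ + ‖F (pick g) - c g‖ := norm_sub_le _ _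
    have h3 : ‖F (x - pick g)‖ < 2 * r' := by linarith [hpick.2]
    have : ‖x - pick g‖ < α * (2 * r') := by
      rw [div_le_iff₀ hα0] at h1
      nlinarith
    rw [dist_eq_norm]
    calc ‖x - pick g‖ < α * (2 * r') := this
      _ = r := by rw [hr'def]; field_simp
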